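/- Let M = (E, ρ) be a matroid and X ⊂ Y ⊆ E two sets such that Y is a dependent set of full rank (ρ(Y) = ρ(E) and ρ(Y) < |Y|) and X is an independent set with ρ(X) < ρ(E). Set k = ρ(E) − ρ(X) and n = |Y − X|. Then the minor M|Y/X is isomorphic to the uniform matroid U_n^k (equivalently, ρ(A ∪ X) − ρ(X) = min(|A|, k) for every A ⊆ Y − X) if and only if all three of the following hold: (1) cl(X) ∩ Y = X; (2) Y − X ⊆ cyc(Y); and (3) for every cyclic flat Z of M, either Z ∩ Y is independent in M or cl(X ∪ cyc(Z ∩ Y)) = E. -/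

import Mathlib

open Finset

structure FinMatroid (α : Type*) [DecidableEq α] where
  E : Finset α
  rk : Finset α → ℕ
  rk_le_card : ∀ A, A ⊆ E → rk A ≤ A.card
  rk_mono : ∀ A B, A ⊆ B → B ⊆ E → rk A ≤ rk B
  rk_submod : ∀ A B, A ⊆ E → B ⊆ E → rk (A ∪ B) + rk (A ∩ B) ≤ rk A + rk B

namespace FinMatroid

variable {α : Type*} [DecidableEq α]

/-- The closure operator `cl(A) = {e ∈ E : ρ(A ∪ {e}) = ρ(A)}`. -/
def cl (M : FinMatroid α) (A : Finset α) : Finset α :=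
  M.E.filter fun e => M.rk (insert e A) = M.rk A

/-- The cyclic operator `cyc(A) = {e ∈ A : ρ(A − {e}) = ρ(A)}`. -/
def cyc (M : FinMatroid α) (A : Finset α) : Finset α :=
  A.filter fun e => M.rk (A.erase e) = M.rk A

/-- A flat is a set fixed by the closure operator. -/
def IsFlat (M : FinMatroid α) (F : Finset α) : Prop :=
  F ⊆ M.E ∧ M.cl F = F

/-- A cyclic set is a set fixed by the cyclic operator. -/
def IsCyclic (M : FinMatroid α) (U : Finset α) : Prop :=
  U ⊆ M.E ∧ M.cyc U = U

/-- A cyclic flat is a set fixed by both the closure and the cyclic operators. -/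
def IsCyclicFlat (M : FinMatroid α) (Z : Finset α) : Prop :=
  Z ⊆ M.E ∧ M.cl Z = Z ∧ M.cyc Z = Z

/-- The minor `M|Y/X`: restriction to `Y` followed by contraction of `X`. -/
def minor (M : FinMatroid α) (X Y : Finset α) (hXY : X ⊆ Y) (hY : Y ⊆ M.E) :
    FinMatroid α where
  E := Y \ X
  rk A := M.rk (A ∪ X) - M.rk X
  rk_le_card := by
    intro A hA
    have hAE : A ⊆ M.E := fun a ha => hY (mem_sdiff.mp (hA ha)).1
    have hXE : X ⊆ M.E := hXY.trans hY
    have h1 := M.rk_submod A X hAE hXE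
    have h2 := M.rk_le_card A hAE
    show M.rk (A ∪ X) - M.rk X ≤ A.card
    omega
  rk_mono := by
    intro A B hAB hB
    have hBE : B ⊆ M.E := fun a ha => hY (mem_sdiff.mp (hB ha)).1
    have hBX : B ∪ X ⊆ M.E := union_subset hBE (hXY.trans hY)
    have := M.rk_mono (A ∪ X) (B ∪ X) (union_subset_union hAB Subset.rfl) hBX
    show M.rk (A ∪ X) - M.rk X ≤ M.rk (B ∪ X) - M.rk X
    omega
  rk_submod := by
    intro A B hA hB
    have hAE : A ⊆ M.E := fun a ha => hY (mem_sdiff.mp (hA ha)).1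
    have hBE : B ⊆ M.E := fun a ha => hY (mem_sdiff.mp (hB ha)).1
    have hXE : X ⊆ M.E := hXY.trans hY
    have hAX : A ∪ X ⊆ M.E := union_subset hAE hXE
    have hBX : B ∪ X ⊆ M.E := union_subset hBE hXE
    have hsub := M.rk_submod (A ∪ X) (B ∪ X) hAX hBX
    have e1 : (A ∪ X) ∪ (B ∪ X) = (A ∪ B) ∪ X := by
      ext x; simp only [mem_union]; tauto
    have e2 : (A ∪ X) ∩ (B ∪ X) = (A ∩ B) ∪ X := by
      ext x; simp only [mem_union, mem_inter]; tauto
    rw [e1, e2] at hsub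
    have h1 : M.rk X ≤ M.rk (A ∪ X) := M.rk_mono X _ subset_union_right hAX
    have h2 : M.rk X ≤ M.rk (B ∪ X) := M.rk_mono X _ subset_union_right hBX
    have hIX : (A ∩ B) ∪ X ⊆ M.E := union_subset (inter_subset_left.trans hAE) hXE
    have hUX : (A ∪ B) ∪ X ⊆ M.E := union_subset (union_subset hAE hBE) hXE
    have h3 : M.rk X ≤ M.rk ((A ∩ B) ∪ X) := M.rk_mono X _ subset_union_right hIX
    have h4 : M.rk X ≤ M.rk ((A ∪ B) ∪ X) := M.rk_mono X _ subset_union_right hUX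
    show M.rk ((A ∪ B) ∪ X) - M.rk X + (M.rk ((A ∩ B) ∪ X) - M.rk X) ≤
      (M.rk (A ∪ X) - M.rk X) + (M.rk (B ∪ X) - M.rk X)
    omega

/-- The restriction `M|Y`. -/
def restrict (M : FinMatroid α) (Y : Finset α) (hY : Y ⊆ M.E) : FinMatroid α where
  E := Y
  rk := M.rk
  rk_le_card := fun A hA => M.rk_le_card A (hA.trans hY)
  rk_mono := fun A B hAB hB => M.rk_mono A B hAB (hB.trans hY)
  rk_submod := fun A B hA hB => M.rk_submod A B (hA.trans hY) (hB.trans hY)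

/-- `M` is binary: it is the matroid of linear dependence of a family of
vectors over the field with two elements. -/
def IsBinary (M : FinMatroid α) : Prop :=
  ∃ (m : ℕ) (φ : α → (Fin m → ZMod 2)),
    ∀ A : Finset α, A ⊆ M.E →
      M.rk A = Module.finrank (ZMod 2) (Submodule.span (ZMod 2) (φ '' (A : Set α)))

def Simple (M : FinMatroid α) : Prop :=
  (∀ e ∈ M.E, M.rk {e} = 1) ∧
    ∀ e ∈ M.E, ∀ f ∈ M.E, e ≠ f → M.rk ({e, f} : Finset α) = 2

def NoIsthmus (M : FinMatroid α) : Prop :=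
  ∀ e ∈ M.E, M.rk (M.E.erase e) = M.rk M.E

def IsMinDist (M : FinMatroid α) (d : ℕ) : Prop :=
  (∃ X ⊆ M.E, M.rk (M.E \ X) < M.rk M.E ∧ X.card = d) ∧
    ∀ X ⊆ M.E, M.rk (M.E \ X) < M.rk M.E → d ≤ X.card

def IsAtomCF (M : FinMatroid α) (Z : Finset α) : Prop :=
  M.IsCyclicFlat Z ∧ Z ≠ ∅ ∧ ¬ ∃ Z', M.IsCyclicFlat Z' ∧ ∅ ⊂ Z' ∧ Z' ⊂ Z

def IsCoatomCF (M : FinMatroid α) (Z : Finset α) : Prop :=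
  M.IsCyclicFlat Z ∧ Z ⊂ M.E ∧ ¬ ∃ Z', M.IsCyclicFlat Z' ∧ Z ⊂ Z' ∧ Z' ⊂ M.E

def IsCircuit (M : FinMatroid α) (C : Finset α) : Prop :=
  C ⊆ M.E ∧ M.rk C < C.card ∧ ∀ D ⊂ C, M.rk D = D.card

end FinMatroid



namespace FinMatroid

variable {α : Type*} [DecidableEq α] (M : FinMatroid α)

lemma aux_rk_insert_le {A : Finset α} {e : α} (hA : A ⊆ M.E) (he : e ∈ M.E) :
    M.rk (insert e A) ≤ M.rk A + 1 := by
  have h := M.rk_submod A {e} hA (by simpa using he)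
  have h1 : M.rk {e} ≤ 1 := by simpa using M.rk_le_card {e} (by simpa using he)
  have hu : A ∪ {e} = insert e A := by ext a; simp [or_comm]
  rw [hu] at h
  omega

lemma aux_rk_union_le (B : Finset α) (hB : B ⊆ M.E) :
    ∀ s : Finset α, s ⊆ M.E → M.rk (B ∪ s) ≤ M.rk B + s.card := by
  intro s
  induction s using Finset.induction_on with
  | empty => intro _; simpa using M.rk_mono B B (Finset.Subset.refl _) hB
  | @insert e s he ih =>
      intro hins
      have hs : s ⊆ M.E := (Finset.subset_insert e s).trans hins
      have heE : e ∈ M.E := hins (Finset.mem_insert_self e s)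
      have hu : B ∪ insert e s = insert e (B ∪ s) := Finset.union_insert _ _ _
      rw [hu, Finset.card_insert_of_notMem he]
      have h1 := M.aux_rk_insert_le (A := B ∪ s) (Finset.union_subset hB hs) heE
      have h2 := ih hs
      omega

lemma aux_rk_le_of_subset {B A : Finset α} (hBA : B ⊆ A) (hA : A ⊆ M.E) :
    M.rk A ≤ M.rk B + (A \ B).card := by
  have hu : B ∪ A \ B = A := Finset.union_sdiff_of_subset hBA
  calc M.rk A = M.rk (B ∪ A \ B) := by rw [hu]
    _ ≤ _ := M.aux_rk_union_le B (hBA.trans hA) _ (Finset.sdiff_subset.trans hA)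

lemma aux_indep_subset {A B : Finset α} (hA : M.rk A = A.card) (hBA : B ⊆ A)
    (hAE : A ⊆ M.E) : M.rk B = B.card := by
  have h1 := M.aux_rk_le_of_subset hBA hAE
  have h2 := M.rk_le_card B (hBA.trans hAE)
  have h3 : (A \ B).card = A.card - B.card := Finset.card_sdiff_of_subset hBA
  have h4 : B.card ≤ A.card := Finset.card_le_card hBA
  omega

lemma aux_rk_insert_eq_of_subset {T T' : Finset α} {e : α} (hTT : T ⊆ T')
    (hT' : T' ⊆ M.E) (he : e ∈ M.E) (h : M.rk (insert e T) = M.rk T) :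
    M.rk (insert e T') = M.rk T' := by
  have hT : T ⊆ M.E := hTT.trans hT'
  have hsub := M.rk_submod (insert e T) T' (Finset.insert_subset he hT) hT'
  have hu : insert e T ∪ T' = insert e T' := by ext a; simp; tauto
  rw [hu] at hsub
  have hi : T ⊆ insert e T ∩ T' := by
    intro a ha
    exact Finset.mem_inter.mpr ⟨Finset.mem_insert_of_mem ha, hTT ha⟩
  have h2 : M.rk T ≤ M.rk (insert e T ∩ T') :=
    M.rk_mono _ _ hi (Finset.inter_subset_right.trans hT')
  have h3 : M.rk T' ≤ M.rk (insert e T') :=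
    M.rk_mono _ _ (Finset.subset_insert e T') (Finset.insert_subset he hT')
  omega

lemma aux_rk_eq_of_forall_insert {T T' : Finset α} (hTT : T ⊆ T') (hT' : T' ⊆ M.E)
    (h : ∀ e ∈ T', M.rk (insert e T) = M.rk T) : M.rk T' = M.rk T := by
  have key : ∀ s : Finset α, s ⊆ T' → M.rk (T ∪ s) = M.rk T := by
    intro s
    induction s using Finset.induction_on with
    | empty => intro _; rw [Finset.union_empty]
    | @insert e s he ih =>
        intro hins
        have hs : s ⊆ T' := (Finset.subset_insert e s).trans hins
        have heT' : e ∈ T' := hins (Finset.mem_insert_self e s)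
        have hUs : T ∪ s ⊆ M.E := Finset.union_subset (hTT.trans hT') (hs.trans hT')
        have hu : T ∪ insert e s = insert e (T ∪ s) := Finset.union_insert _ _ _
        rw [hu]
        have h1 := M.aux_rk_insert_eq_of_subset (T := T)
          (Finset.subset_union_left) hUs (hT' heT') (h e heT')
        rw [h1, ih hs]
  have h2 := key T' (Finset.Subset.refl _)
  rwa [Finset.union_eq_right.mpr hTT] at h2

lemma aux_rk_of_cl_eq_ground {T : Finset α} (hT : T ⊆ M.E) (h : M.cl T = M.E) :
    M.rk T = M.rk M.E := by
  have h' : ∀ e ∈ M.E, M.rk (insert e T) = M.rk T := by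
    intro e he
    have : e ∈ M.cl T := h ▸ he
    exact (Finset.mem_filter.mp this).2
  exact (M.aux_rk_eq_of_forall_insert hT (Finset.Subset.refl _) h').symm

lemma aux_cl_eq_ground {T : Finset α} (hT : T ⊆ M.E) (h : M.rk T = M.rk M.E) :
    M.cl T = M.E := by
  unfold cl
  rw [Finset.filter_eq_self]
  intro e he
  have h1 : M.rk T ≤ M.rk (insert e T) :=
    M.rk_mono _ _ (Finset.subset_insert _ _) (Finset.insert_subset he hT)
  have h2 : M.rk (insert e T) ≤ M.rk M.E :=
    M.rk_mono _ _ (Finset.insert_subset he hT) (Finset.Subset.refl _)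
  omega

lemma aux_exists_circuit {A : Finset α} (hA : A ⊆ M.E) (hdep : M.rk A < A.card) :
    ∃ C, C ⊆ A ∧ M.rk C < C.card ∧ ∀ B ⊆ C, M.rk B < B.card → B = C := by
  classical
  have hne : (A.powerset.filter fun C => M.rk C < C.card).Nonempty :=
    ⟨A, by simp [hdep]⟩
  obtain ⟨C, hC, hmin⟩ := Finset.exists_min_image _ (fun C => C.card) hne
  simp only [Finset.mem_filter, Finset.mem_powerset] at hC
  refine ⟨C, hC.1, hC.2, ?_⟩
  intro B hBC hB
  by_contra hne'
  have hlt : B.card < C.card := Finset.card_lt_card (lt_of_le_of_ne hBC hne')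
  have := hmin B (by
    simp only [Finset.mem_filter, Finset.mem_powerset]
    exact ⟨hBC.trans hC.1, hB⟩)
  omega

lemma aux_circuit_erase {C : Finset α} (hC : C ⊆ M.E) (hdep : M.rk C < C.card)
    (hmin : ∀ B ⊆ C, M.rk B < B.card → B = C) {e : α} (he : e ∈ C) :
    M.rk (C.erase e) = C.card - 1 ∧ M.rk C = C.card - 1 := by
  have hce : (C.erase e).card = C.card - 1 := Finset.card_erase_of_mem he
  have h1 : M.rk (C.erase e) = (C.erase e).card := by
    by_contra h
    have hle := M.rk_le_card (C.erase e) ((Finset.erase_subset e C).trans hC)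
    have hdep' : M.rk (C.erase e) < (C.erase e).card := lt_of_le_of_ne hle h
    have heq := hmin _ (Finset.erase_subset e C) hdep'
    exact (Finset.erase_eq_self.mp heq) he
  have h2 : M.rk (C.erase e) ≤ M.rk C :=
    M.rk_mono _ _ (Finset.erase_subset e C) hC
  omega

lemma aux_circuit_subset_cyc {C W : Finset α} (hW : W ⊆ M.E) (hCW : C ⊆ W)
    (hdep : M.rk C < C.card) (hmin : ∀ B ⊆ C, M.rk B < B.card → B = C) :
    C ⊆ M.cyc W := by
  intro e he
  obtain ⟨h1, h2⟩ := M.aux_circuit_erase (hCW.trans hW) hdep hmin he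
  have hins : M.rk (insert e (C.erase e)) = M.rk (C.erase e) := by
    rw [Finset.insert_erase he]; omega
  have h3 := M.aux_rk_insert_eq_of_subset (T := C.erase e) (T' := W.erase e)
    (Finset.erase_subset_erase e hCW) ((Finset.erase_subset e W).trans hW)
    (hW (hCW he)) hins
  rw [Finset.insert_erase (hCW he)] at h3
  exact Finset.mem_filter.mpr ⟨hCW he, h3.symm⟩

lemma aux_cl_circuit_cyclicFlat {C : Finset α} (hC : C ⊆ M.E)
    (hdep : M.rk C < C.card) (hmin : ∀ B ⊆ C, M.rk B < B.card → B = C) :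
    M.IsCyclicFlat (M.cl C) ∧ C ⊆ M.cl C ∧ M.rk (M.cl C) = M.rk C := by
  have hCcl : C ⊆ M.cl C := by
    intro e he
    exact Finset.mem_filter.mpr ⟨hC he, by rw [Finset.insert_eq_self.mpr he]⟩
  have hclE : M.cl C ⊆ M.E := Finset.filter_subset _ _
  have hrk : M.rk (M.cl C) = M.rk C :=
    M.aux_rk_eq_of_forall_insert hCcl hclE (fun e he => (Finset.mem_filter.mp he).2)
  refine ⟨⟨hclE, ?_, ?_⟩, hCcl, hrk⟩
  · -- cl (cl C) = cl C
    apply Finset.Subset.antisymm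
    · intro e he
      obtain ⟨heE, hrk2⟩ := Finset.mem_filter.mp he
      have ha : M.rk (insert e C) ≤ M.rk (insert e (M.cl C)) :=
        M.rk_mono _ _ (Finset.insert_subset_insert e hCcl)
          (Finset.insert_subset heE hclE)
      have hb : M.rk C ≤ M.rk (insert e C) :=
        M.rk_mono _ _ (Finset.subset_insert e C) (Finset.insert_subset heE hC)
      exact Finset.mem_filter.mpr ⟨heE, by omega⟩
    · intro e he
      exact Finset.mem_filter.mpr ⟨hclE he, by rw [Finset.insert_eq_self.mpr he]⟩
  · -- cyc (cl C) = cl C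
    unfold cyc
    rw [Finset.filter_eq_self]
    intro e he
    have hle : M.rk ((M.cl C).erase e) ≤ M.rk (M.cl C) :=
      M.rk_mono _ _ (Finset.erase_subset e _) hclE
    by_cases heC : e ∈ C
    · obtain ⟨h1, h2⟩ := M.aux_circuit_erase hC hdep hmin heC
      have hge : M.rk (C.erase e) ≤ M.rk ((M.cl C).erase e) :=
        M.rk_mono _ _ (Finset.erase_subset_erase e hCcl)
          ((Finset.erase_subset e _).trans hclE)
      omega
    · have hsub : C ⊆ (M.cl C).erase e := Finset.subset_erase.mpr ⟨hCcl, heC⟩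
      have hge : M.rk C ≤ M.rk ((M.cl C).erase e) :=
        M.rk_mono _ _ hsub ((Finset.erase_subset e _).trans hclE)
      omega

end FinMatroid

/-- For `X ⊂ Y ⊆ E` with `Y` a dependent full-rank set and `X`
independent of non-full rank, with `k = ρ(E) − ρ(X)`, the minor `M|Y/X` is uniform
(`ρ(A ∪ X) − ρ(X) = min(|A|, k)` for all `A ⊆ Y − X`) iff (1) `cl(X) ∩ Y = X`,
(2) `Y − X ⊆ cyc(Y)`, and (3) for every cyclic flat `Z`, either `Z ∩ Y` is
independent or `cl(X ∪ cyc(Z ∩ Y)) = E`. -/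
theorem minor_uniform_iff {α : Type*} [DecidableEq α] (M : FinMatroid α)
    (X Y : Finset α) (hXY : X ⊂ Y) (hYE : Y ⊆ M.E)
    (hYfull : M.rk Y = M.rk M.E) (hYdep : M.rk Y < Y.card)
    (hXind : M.rk X = X.card) (hXr : M.rk X < M.rk M.E) :
    (∀ A ⊆ Y \ X, M.rk (A ∪ X) - M.rk X = min A.card (M.rk M.E - M.rk X)) ↔
      (M.cl X ∩ Y = X ∧ Y \ X ⊆ M.cyc Y ∧
        ∀ Z, M.IsCyclicFlat Z →
          (M.rk (Z ∩ Y) = (Z ∩ Y).card ∨ M.cl (X ∪ M.cyc (Z ∩ Y)) = M.E)) := by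
  classical
  have hXE : X ⊆ M.E := hXY.subset.trans hYE
  constructor
  · intro hU
    refine ⟨?_, ?_, ?_⟩
    · -- (1) cl X ∩ Y = X
      apply Finset.Subset.antisymm
      · intro e he
        rw [Finset.mem_inter] at he
        obtain ⟨hecl, heY⟩ := he
        rw [FinMatroid.cl, Finset.mem_filter] at hecl
        by_contra heX
        have hA : {e} ⊆ Y \ X := by
          simp only [Finset.singleton_subset_iff, Finset.mem_sdiff]
          exact ⟨heY, heX⟩
        have hU' := hU {e} hA
        have hxle : M.rk X ≤ M.rk ({e} ∪ X) :=
          M.rk_mono _ _ Finset.subset_union_right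
            (Finset.union_subset (by simpa using hecl.1) hXE)
        have hsu : {e} ∪ X = insert e X := by ext a; simp
        rw [hsu, hecl.2, Finset.card_singleton,
          min_eq_left (by omega : 1 ≤ M.rk M.E - M.rk X)] at hU'
        rw [hsu, hecl.2] at hxle
        omega
      · intro e heX
        refine Finset.mem_inter.mpr ⟨?_, hXY.subset heX⟩
        rw [FinMatroid.cl, Finset.mem_filter]
        exact ⟨hXE heX, by rw [Finset.insert_eq_self.mpr heX]⟩
    · -- (2) Y \ X ⊆ cyc Y
      intro e he
      rw [Finset.mem_sdiff] at he
      have heYX : e ∈ Y \ X := Finset.mem_sdiff.mpr he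
      have hA : (Y \ X).erase e ⊆ Y \ X := Finset.erase_subset _ _
      have hcard : ((Y \ X).erase e).card = (Y \ X).card - 1 :=
        Finset.card_erase_of_mem heYX
      have hYX : (Y \ X).card = Y.card - X.card := Finset.card_sdiff_of_subset hXY.subset
      have hXcard : X.card ≤ Y.card := Finset.card_le_card hXY.subset
      have hU' := hU _ hA
      have hunion : (Y \ X).erase e ∪ X = Y.erase e := by
        ext a
        simp only [Finset.mem_union, Finset.mem_erase, Finset.mem_sdiff]
        constructor
        · rintro (⟨hne, haY, haX⟩ | haX)
          · exact ⟨hne, haY⟩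
          · exact ⟨fun h => he.2 (h ▸ haX), hXY.subset haX⟩
        · rintro ⟨hne, haY⟩
          by_cases haX : a ∈ X
          · exact Or.inr haX
          · exact Or.inl ⟨hne, haY, haX⟩
      rw [hunion] at hU'
      have hxle : M.rk X ≤ M.rk (Y.erase e) := by
        apply M.rk_mono _ _ _ ((Finset.erase_subset _ _).trans hYE)
        rw [← hunion]; exact Finset.subset_union_right
      rw [min_eq_right (by omega : M.rk M.E - M.rk X ≤ ((Y \ X).erase e).card)] at hU'
      have hle : M.rk (Y.erase e) ≤ M.rk Y :=
        M.rk_mono _ _ (Finset.erase_subset _ _) hYE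
      rw [FinMatroid.cyc, Finset.mem_filter]
      exact ⟨he.1, by omega⟩
    · -- (3)
      intro Z _
      by_cases hWind : M.rk (Z ∩ Y) = (Z ∩ Y).card
      · exact Or.inl hWind
      right
      have hWY : Z ∩ Y ⊆ Y := Finset.inter_subset_right
      have hWE : Z ∩ Y ⊆ M.E := hWY.trans hYE
      have hWdep : M.rk (Z ∩ Y) < (Z ∩ Y).card :=
        lt_of_le_of_ne (M.rk_le_card _ hWE) hWind
      obtain ⟨C, hCW, hCdep, hCmin⟩ := M.aux_exists_circuit hWE hWdep
      have hCcyc : C ⊆ M.cyc (Z ∩ Y) := M.aux_circuit_subset_cyc hWE hCW hCdep hCmin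
      set D := M.cyc (Z ∩ Y) with hDdef
      have hDW : D ⊆ Z ∩ Y := Finset.filter_subset _ _
      have hDE : D ⊆ M.E := hDW.trans hWE
      have hDdep : M.rk D < D.card := by
        have h1 := M.aux_rk_le_of_subset hCcyc hDE
        have h2 : (D \ C).card = D.card - C.card := Finset.card_sdiff_of_subset hCcyc
        have h3 : C.card ≤ D.card := Finset.card_le_card hCcyc
        omega
      have hAY : D \ X ⊆ Y \ X :=
        Finset.sdiff_subset_sdiff (hDW.trans hWY) (Finset.Subset.refl _)
      have hU' := hU _ hAY
      have hunion : D \ X ∪ X = D ∪ X := by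
        ext a
        by_cases h : a ∈ X <;>
          simp only [Finset.mem_union, Finset.mem_sdiff, h] <;> tauto
      rw [hunion] at hU'
      have hDXE : D ∪ X ⊆ M.E := Finset.union_subset hDE hXE
      have hxle : M.rk X ≤ M.rk (D ∪ X) :=
        M.rk_mono _ _ Finset.subset_union_right hDXE
      by_cases hcase : (D \ X).card < M.rk M.E - M.rk X
      · exfalso
        rw [min_eq_left (le_of_lt hcase)] at hU'
        have hcard : (D \ X).card + X.card = (D ∪ X).card :=
          Finset.card_sdiff_add_card D X
        have hind : M.rk (D ∪ X) = (D ∪ X).card := by omega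
        have hDind := M.aux_indep_subset hind Finset.subset_union_left hDXE
        omega
      · rw [min_eq_right (by omega)] at hU'
        have hfull : M.rk (X ∪ D) = M.rk M.E := by
          rw [Finset.union_comm]; omega
        exact M.aux_cl_eq_ground (Finset.union_subset hXE hDE) hfull
  · rintro ⟨-, -, h3⟩ A hA
    have key : ∀ A₀ ⊆ Y \ X, A₀.card + M.rk X ≤ M.rk M.E →
        M.rk (A₀ ∪ X) = M.rk X + A₀.card := by
      by_contra hcon
      push_neg at hcon
      obtain ⟨A₁, hA₁, hk₁, hne₁⟩ := hcon
      have hfam : ((Y \ X).powerset.filter fun B =>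
          B.card + M.rk X ≤ M.rk M.E ∧ M.rk (B ∪ X) ≠ M.rk X + B.card).Nonempty := by
        refine ⟨A₁, ?_⟩
        simp only [Finset.mem_filter, Finset.mem_powerset]
        exact ⟨hA₁, hk₁, hne₁⟩
      obtain ⟨A₀, hA₀mem, hmin⟩ := Finset.exists_min_image _ (fun B => B.card) hfam
      simp only [Finset.mem_filter, Finset.mem_powerset] at hA₀mem
      obtain ⟨hA₀sub, hA₀k, hA₀ne⟩ := hA₀mem
      have hA₀E : A₀ ⊆ M.E := (hA₀sub.trans Finset.sdiff_subset).trans hYE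
      have hAXE : A₀ ∪ X ⊆ M.E := Finset.union_subset hA₀E hXE
      have hAXY : A₀ ∪ X ⊆ Y :=
        Finset.union_subset (hA₀sub.trans Finset.sdiff_subset) hXY.subset
      have hdisj : ∀ a ∈ A₀, a ∉ X := fun a ha => (Finset.mem_sdiff.mp (hA₀sub ha)).2
      have hcardAX : (A₀ ∪ X).card = A₀.card + X.card :=
        Finset.card_union_of_disjoint (Finset.disjoint_left.mpr hdisj)
      have hA₀pos : 0 < A₀.card := by
        rcases Finset.eq_empty_or_nonempty A₀ with h | h
        · exfalso; apply hA₀ne; rw [h]; simp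
        · exact Finset.card_pos.mpr h
      have herase : ∀ e ∈ A₀, M.rk (A₀.erase e ∪ X) = M.rk X + A₀.card - 1 := by
        intro e he
        have hsub' : A₀.erase e ⊆ Y \ X := (Finset.erase_subset _ _).trans hA₀sub
        have hcard' : (A₀.erase e).card = A₀.card - 1 := Finset.card_erase_of_mem he
        have h1 : M.rk (A₀.erase e ∪ X) = M.rk X + (A₀.erase e).card := by
          by_contra hcontra
          have := hmin (A₀.erase e) (by
            simp only [Finset.mem_filter, Finset.mem_powerset]
            exact ⟨hsub', by omega, hcontra⟩)
          omega
        omega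
      have hAXle : M.rk (A₀ ∪ X) ≤ (A₀ ∪ X).card := M.rk_le_card _ hAXE
      obtain ⟨e₀, he₀⟩ := Finset.card_pos.mp hA₀pos
      have hge : M.rk X + A₀.card - 1 ≤ M.rk (A₀ ∪ X) := by
        have h1 := herase e₀ he₀
        have h2 : M.rk (A₀.erase e₀ ∪ X) ≤ M.rk (A₀ ∪ X) :=
          M.rk_mono _ _ (Finset.union_subset_union (Finset.erase_subset _ _)
            (Finset.Subset.refl _)) hAXE
        omega
      have hAXdep : M.rk (A₀ ∪ X) < (A₀ ∪ X).card := by omega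
      obtain ⟨C, hCAX, hCdep, hCmin⟩ := M.aux_exists_circuit hAXE hAXdep
      have hCE : C ⊆ M.E := hCAX.trans hAXE
      have hA₀C : A₀ ⊆ C := by
        intro e he
        by_contra heC
        have hCsub : C ⊆ A₀.erase e ∪ X := by
          intro a ha
          rcases Finset.mem_union.mp (hCAX ha) with h' | h'
          · exact Finset.mem_union_left _
              (Finset.mem_erase.mpr ⟨fun hh => heC (hh ▸ ha), h'⟩)
          · exact Finset.mem_union_right _ h'
        have hindep : M.rk (A₀.erase e ∪ X) = (A₀.erase e ∪ X).card := by
          have h1 := herase e he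
          have hcard' : (A₀.erase e ∪ X).card = (A₀.erase e).card + X.card :=
            Finset.card_union_of_disjoint (Finset.disjoint_left.mpr
              (fun a ha => hdisj a (Finset.mem_of_mem_erase ha)))
          have hce : (A₀.erase e).card = A₀.card - 1 := Finset.card_erase_of_mem he
          omega
        have := M.aux_indep_subset hindep hCsub
          (Finset.union_subset ((Finset.erase_subset _ _).trans hA₀E) hXE)
        omega
      obtain ⟨hZcf, hCZ, hZrk⟩ := M.aux_cl_circuit_cyclicFlat hCE hCdep hCmin
      set Z := M.cl C with hZdef
      have hCZY : C ⊆ Z ∩ Y := Finset.subset_inter hCZ (hCAX.trans hAXY)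
      have hWE : Z ∩ Y ⊆ M.E := Finset.inter_subset_right.trans hYE
      have hWrk : M.rk (Z ∩ Y) ≤ M.rk Z :=
        M.rk_mono _ _ Finset.inter_subset_left hZcf.1
      have hcC : C.card ≤ (Z ∩ Y).card := Finset.card_le_card hCZY
      rcases h3 Z hZcf with h | h
      · omega
      · have hrk_cl := M.aux_rk_of_cl_eq_ground
          (Finset.union_subset hXE ((Finset.filter_subset _ _).trans hWE)) h
        set S := M.cyc (Z ∩ Y) with hSdef
        have hrk_cl' : M.rk (X ∪ S) = M.rk M.E := hrk_cl
        have hCS : C ⊆ S := M.aux_circuit_subset_cyc hWE hCZY hCdep hCmin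
        have hSZ : S ⊆ Z := (Finset.filter_subset _ _).trans Finset.inter_subset_left
        have hSE : S ⊆ M.E := hSZ.trans hZcf.1
        have hSrk : M.rk S ≤ M.rk Z := M.rk_mono _ _ hSZ hZcf.1
        have hsubmod := M.rk_submod X S hXE hSE
        have hXSind : M.rk (X ∩ S) = (X ∩ S).card :=
          M.aux_indep_subset hXind Finset.inter_subset_left hXE
        have hCXS : (C ∩ X).card ≤ (X ∩ S).card := by
          apply Finset.card_le_card
          intro a ha
          rw [Finset.mem_inter] at ha ⊢
          exact ⟨ha.2, hCS ha.1⟩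
        have hCsplit : (C ∩ X).card + (C \ X).card = C.card := by
          have hd : Disjoint (C ∩ X) (C \ X) := Finset.disjoint_left.mpr
            (fun a ha hb => (Finset.mem_sdiff.mp hb).2 (Finset.mem_inter.mp ha).2)
          have hcu := Finset.card_union_of_disjoint hd
          have hun : C ∩ X ∪ C \ X = C := by
            ext a; by_cases h : a ∈ X <;> simp [h]
          rw [hun] at hcu
          omega
        have hCXA : C \ X ⊆ A₀ := by
          intro a ha
          rw [Finset.mem_sdiff] at ha
          rcases Finset.mem_union.mp (hCAX ha.1) with h' | h'
          · exact h'
          · exact absurd h' ha.2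
        have hCXA' : (C \ X).card ≤ A₀.card := Finset.card_le_card hCXA
        have hCcard : 1 ≤ C.card := by omega
        have hrkC : C.card ≤ M.rk C + 1 := by
          obtain ⟨e, he⟩ := Finset.card_pos.mp hCcard
          obtain ⟨h1, h2⟩ := M.aux_circuit_erase hCE hCdep hCmin he
          omega
        omega
    have hAE : A ⊆ M.E := (hA.trans Finset.sdiff_subset).trans hYE
    have hAXE : A ∪ X ⊆ M.E := Finset.union_subset hAE hXE
    have hXle : M.rk X ≤ M.rk (A ∪ X) :=
      M.rk_mono _ _ Finset.subset_union_right hAXE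
    by_cases hc : A.card ≤ M.rk M.E - M.rk X
    · have := key A hA (by omega)
      rw [min_eq_left hc]
      omega
    · push_neg at hc
      obtain ⟨A', hA'A, hA'card⟩ :=
        Finset.exists_subset_card_eq (s := A) (n := M.rk M.E - M.rk X) (le_of_lt hc)
      have h1 := key A' (hA'A.trans hA) (by omega)
      have hmono : M.rk (A' ∪ X) ≤ M.rk (A ∪ X) :=
        M.rk_mono _ _ (Finset.union_subset_union hA'A (Finset.Subset.refl _)) hAXE
      have hup : M.rk (A ∪ X) ≤ M.rk Y :=
        M.rk_mono _ _ (Finset.union_subset (hA.trans Finset.sdiff_subset)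
          hXY.subset) hYE
      rw [min_eq_right hc.le]
      omega
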